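/- Let s = 2k and t = (64k)^{2k}. Suppose x₁,…,x_n are vertices such that x_i is joined to x_j whenever 1 ≤ |i−j| ≤ k, and for each i a set B(x_i) of t vertices is given. Suppose that for every edge {x_i, x_j} (1 ≤ |i−j| ≤ k), the bipartite graph between B(x_i) and B(x_j) whose edges are the blue edges contains no K_{s,s} (so, by Kővári–Sós–Turán, at most 4t^{2−1/s} blue edges). If y_i ∈ B(x_i) are chosen independently and uniformly at random, then for each such pair the probability that {y_i, y_j} is blue is at most 4t^{−1/s}, and since 4·(4k)·4t^{−1/s} ≤ 1, by the Lovász Local Lemma there is a choice of y₁,…,y_n such that all pairs {y_i, y_j} with 1 ≤ |i−j| ≤ k are red edges. -/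

import Mathlib

open SimpleGraph Finset

/-- `H` has a copy (an injective graph homomorphism image) in `G`. -/
def Copy {V W : Type*} (H : SimpleGraph W) (G : SimpleGraph V) : Prop :=
  ∃ f : H →g G, Function.Injective f

/-- `G → H`: every red/blue colouring of the edges of `G` (red edges given by a
subgraph `R ≤ G`, blue edges by `G \ R`) contains a monochromatic copy of `H`. -/
def Arrow {V W : Type*} (G : SimpleGraph V) (H : SimpleGraph W) : Prop :=
  ∀ R : SimpleGraph V, R ≤ G → Copy H R ∨ Copy H (G \ R)

/-- The size-Ramsey number `r̂(H)`. -/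
noncomputable def sizeRamsey {W : Type*} (H : SimpleGraph W) : ℕ :=
  sInf {m | ∃ (N : ℕ) (G : SimpleGraph (Fin N)), Arrow G H ∧ G.edgeSet.ncard = m}

/-- The (2-colour) Ramsey number `r(H)`. -/
noncomputable def ramseyNum {W : Type*} (H : SimpleGraph W) : ℕ :=
  sInf {N | Arrow (⊤ : SimpleGraph (Fin N)) H}

/-- The `k`-th power `H^k` of a graph: edges between distinct vertices at distance at most `k`. -/
def gpow {V : Type*} (H : SimpleGraph V) (k : ℕ) : SimpleGraph V where
  Adj u v := u ≠ v ∧ ∃ p : H.Walk u v, p.length ≤ k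
  symm := by constructor; rintro u v ⟨h, p, hp⟩; exact ⟨h.symm, p.reverse, by simpa using hp⟩
  loopless := by constructor; rintro u ⟨h, -⟩; exact h rfl

/-- The complete blow-up of `H` where each vertex is replaced by a clique of size `m`. -/
def blowup {V : Type*} (H : SimpleGraph V) (m : ℕ) : SimpleGraph (V × Fin m) where
  Adj x y := (x.1 = y.1 ∧ x.2 ≠ y.2) ∨ H.Adj x.1 y.1
  symm := by constructor; rintro x y (⟨h1, h2⟩ | h); exacts [Or.inl ⟨h1.symm, h2.symm⟩, Or.inr h.symm]
  loopless := by constructor; rintro x (⟨-, h⟩ | h); exacts [h rfl, H.loopless.irrefl _ h]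

/-- `P_n^k`, the `k`-th power of the path on `n` vertices. -/
def pathPow (n k : ℕ) : SimpleGraph (Fin n) where
  Adj i j := i ≠ j ∧ i.val - j.val ≤ k ∧ j.val - i.val ≤ k
  symm := by constructor; rintro i j ⟨h, h1, h2⟩; exact ⟨h.symm, h2, h1⟩
  loopless := by constructor; rintro i ⟨h, -⟩; exact h rfl

/-- `C_n^k`, the `k`-th power of the cycle on `n` vertices. -/
def cyclePow (n k : ℕ) : SimpleGraph (ZMod n) where
  Adj i j := i ≠ j ∧ ∃ d : ℕ, 1 ≤ d ∧ d ≤ k ∧ (i = j + (d : ZMod n) ∨ j = i + (d : ZMod n))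
  symm := by constructor; rintro i j ⟨h, d, h1, h2, h3⟩; exact ⟨h.symm, d, h1, h2, h3.symm⟩
  loopless := by constructor; rintro i ⟨h, -⟩; exact h rfl
open Finset in
private lemma count_blue {V : Type*} [DecidableEq V] (blue : V → V → Prop)
    [∀ u v, Decidable (blue u v)] (s : ℕ) (hs : 1 ≤ s) (A C : Finset V)
    (hno : ∀ S T : Finset V, S ⊆ A → T ⊆ C → S.card = s → T.card = s →
      ¬ ∀ u ∈ S, ∀ v ∈ T, blue u v) :
    ∑ u ∈ A, ((C.filter (fun v => blue u v)).card).choose s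
      ≤ (s - 1) * (C.card).choose s := by
  have key : ∀ u ∈ A, ((C.filter (fun v => blue u v)).card).choose s
      = ∑ T ∈ C.powersetCard s, (if ∀ v ∈ T, blue u v then 1 else 0) := by
    intro u _
    rw [← Finset.card_powersetCard, ← Finset.card_filter]
    congr 1
    ext T
    simp only [Finset.mem_filter, Finset.mem_powersetCard]
    constructor
    · rintro ⟨hT, hc⟩
      exact ⟨⟨fun x hx => (Finset.mem_filter.1 (hT hx)).1, hc⟩,
        fun v hv => (Finset.mem_filter.1 (hT hv)).2⟩
    · rintro ⟨⟨hT, hc⟩, hb⟩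
      exact ⟨fun x hx => Finset.mem_filter.2 ⟨hT hx, hb x hx⟩, hc⟩
  rw [Finset.sum_congr rfl key, Finset.sum_comm]
  have bound : ∀ T ∈ C.powersetCard s,
      (∑ u ∈ A, if ∀ v ∈ T, blue u v then 1 else 0) ≤ s - 1 := by
    intro T hT
    rw [← Finset.card_filter]
    by_contra hlt
    push_neg at hlt
    have hsc : s ≤ (A.filter (fun u => ∀ v ∈ T, blue u v)).card := by omega
    obtain ⟨S, hSsub, hScard⟩ := Finset.exists_subset_card_eq hsc
    obtain ⟨hTC, hTcard⟩ := Finset.mem_powersetCard.1 hT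
    exact hno S T (hSsub.trans (Finset.filter_subset _ _)) hTC hScard hTcard
      (fun u hu v hv => (Finset.mem_filter.1 (hSsub hu)).2 v hv)
  calc ∑ T ∈ C.powersetCard s, (∑ u ∈ A, if ∀ v ∈ T, blue u v then 1 else 0)
      ≤ ∑ _T ∈ C.powersetCard s, (s-1) := Finset.sum_le_sum bound
    _ = (C.card).choose s * (s-1) := by
        rw [Finset.sum_const, smul_eq_mul, Finset.card_powersetCard]
    _ = (s-1) * (C.card).choose s := Nat.mul_comm _ _

private lemma blue_deg_bound {V : Type*} [DecidableEq V] (blue : V → V → Prop)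
    [∀ u v, Decidable (blue u v)] (s d : ℕ) (hs : 1 ≤ s) (A C : Finset V)
    (hno : ∀ S T : Finset V, S ⊆ A → T ⊆ C → S.card = s → T.card = s →
      ¬ ∀ u ∈ S, ∀ v ∈ T, blue u v) :
    (A.filter (fun u => d ≤ (C.filter (fun v => blue u v)).card)).card * (d + 1 - s) ^ s
      ≤ (s - 1) * C.card ^ s := by
  have h1 := count_blue blue s hs A C hno
  have h2 : (A.filter (fun u => d ≤ (C.filter (fun v => blue u v)).card)).card * d.choose s
      ≤ ∑ u ∈ A, ((C.filter (fun v => blue u v)).card).choose s := by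
    calc (A.filter (fun u => d ≤ (C.filter (fun v => blue u v)).card)).card * d.choose s
        ≤ ∑ u ∈ A.filter (fun u => d ≤ (C.filter (fun v => blue u v)).card),
            ((C.filter (fun v => blue u v)).card).choose s := by
          rw [← smul_eq_mul]
          apply Finset.card_nsmul_le_sum
          intro u hu
          exact Nat.choose_le_choose s (Finset.mem_filter.1 hu).2
      _ ≤ _ := Finset.sum_le_sum_of_subset (Finset.filter_subset _ _)
  have h3 : (d + 1 - s) ^ s ≤ s.factorial * d.choose s := by
    rw [← Nat.descFactorial_eq_factorial_mul_choose]
    exact Nat.pow_sub_le_descFactorial d s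
  calc (A.filter (fun u => d ≤ (C.filter (fun v => blue u v)).card)).card * (d + 1 - s) ^ s
      ≤ (A.filter (fun u => d ≤ (C.filter (fun v => blue u v)).card)).card
          * (s.factorial * d.choose s) := Nat.mul_le_mul_left _ h3
    _ = s.factorial * ((A.filter (fun u => d ≤ (C.filter (fun v => blue u v)).card)).card
          * d.choose s) := by ring
    _ ≤ s.factorial * ((s - 1) * (C.card).choose s) :=
        Nat.mul_le_mul_left _ (h2.trans h1)
    _ = (s - 1) * (s.factorial * (C.card).choose s) := by ring
    _ = (s - 1) * (C.card).descFactorial s := by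
        rw [Nat.descFactorial_eq_factorial_mul_choose]
    _ ≤ (s - 1) * C.card ^ s := Nat.mul_le_mul_left _ (Nat.descFactorial_le_pow _ _)

private lemma blue_edge_bound {V : Type*} [DecidableEq V] (blue : V → V → Prop)
    [∀ u v, Decidable (blue u v)] (s t E : ℕ) (hs : 1 ≤ s) (A C : Finset V)
    (hA : A.card = t) (hC : C.card = t)
    (hno : ∀ S T : Finset V, S ⊆ A → T ⊆ C → S.card = s → T.card = s →
      ¬ ∀ u ∈ S, ∀ v ∈ T, blue u v)
    (hE1 : (s - 1) * t ^ (2 * s - 1) < E ^ s) (hE2 : t * s ≤ E) :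
    ∑ u ∈ A, (C.filter (fun v => blue u v)).card ≤ 2 * E := by
  set deg : V → ℕ := fun u => (C.filter (fun v => blue u v)).card with hdeg
  have h1 := count_blue blue s hs A C hno
  rw [hC] at h1
  have step1 : ∑ u ∈ A, (deg u - s) ^ s ≤ (s - 1) * t ^ s := by
    calc ∑ u ∈ A, (deg u - s) ^ s ≤ ∑ u ∈ A, s.factorial * (deg u).choose s := by
          apply Finset.sum_le_sum
          intro u _
          calc (deg u - s) ^ s ≤ (deg u + 1 - s) ^ s :=
                Nat.pow_le_pow_left (by omega) s
            _ ≤ (deg u).descFactorial s := Nat.pow_sub_le_descFactorial _ _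
            _ = s.factorial * (deg u).choose s :=
                Nat.descFactorial_eq_factorial_mul_choose _ _
      _ = s.factorial * ∑ u ∈ A, (deg u).choose s := by rw [Finset.mul_sum]
      _ ≤ s.factorial * ((s - 1) * t.choose s) := Nat.mul_le_mul_left _ h1
      _ = (s - 1) * (s.factorial * t.choose s) := by ring
      _ = (s - 1) * t.descFactorial s := by rw [Nat.descFactorial_eq_factorial_mul_choose]
      _ ≤ (s - 1) * t ^ s := Nat.mul_le_mul_left _ (Nat.descFactorial_le_pow _ _)
  set x : ℕ := ∑ u ∈ A, (deg u - s) with hx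
  have step3 : x ^ s ≤ (s - 1) * t ^ (2 * s - 1) := by
    have hpm := pow_sum_le_card_mul_sum_pow (s := A)
      (f := fun u => ((deg u - s : ℕ) : ℝ)) (fun i _ => by positivity) (s - 1)
    rw [hA] at hpm
    have hss : s - 1 + 1 = s := by omega
    rw [hss] at hpm
    have hcast : ((x : ℝ)) ^ s ≤ ((s - 1) * t ^ (2 * s - 1) : ℕ) := by
      push_cast [Nat.cast_sub hs]
      calc ((x : ℝ)) ^ s = (∑ u ∈ A, ((deg u - s : ℕ) : ℝ)) ^ s := by
            rw [hx]; push_cast; ring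
        _ ≤ (t : ℝ) ^ (s - 1) * ∑ u ∈ A, ((deg u - s : ℕ) : ℝ) ^ s := hpm
        _ ≤ (t : ℝ) ^ (s - 1) * (((s - 1) * t ^ s : ℕ) : ℝ) := by
            apply mul_le_mul_of_nonneg_left _ (by positivity)
            calc (∑ u ∈ A, ((deg u - s : ℕ) : ℝ) ^ s)
                = ((∑ u ∈ A, (deg u - s) ^ s : ℕ) : ℝ) := by push_cast; ring
              _ ≤ _ := by exact_mod_cast step1
        _ = ((s:ℝ) - 1) * (t:ℝ) ^ (2 * s - 1) := by
            push_cast [Nat.cast_sub hs]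
            rw [mul_comm, mul_assoc, ← pow_add]
            congr 2
            omega
    exact_mod_cast hcast
  have step4 : x ≤ E := by
    by_contra hEx
    push_neg at hEx
    have : E ^ s < x ^ s := Nat.pow_lt_pow_left hEx (by omega)
    omega
  calc ∑ u ∈ A, deg u ≤ ∑ u ∈ A, ((deg u - s) + s) :=
        Finset.sum_le_sum (fun u _ => by omega)
    _ = x + A.card * s := by rw [Finset.sum_add_distrib, Finset.sum_const, smul_eq_mul]
    _ ≤ E + E := by rw [hA]; omega
    _ = 2 * E := by ring

private lemma aux_4k : ∀ k : ℕ, 1 ≤ k → 4 * k ≤ 4 ^ k := by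
  intro k
  induction k with
  | zero => omega
  | succ m ih =>
    intro _
    rcases Nat.eq_zero_or_pos m with h | h
    · subst h; norm_num
    · have := ih h
      have h4 : 4 ^ (m + 1) = 4 * 4 ^ m := by ring
      omega

private lemma aux_16k : ∀ k : ℕ, 1 ≤ k → 16 * (k * k) < 7 * 16 ^ k := by
  intro k
  induction k with
  | zero => omega
  | succ m ih =>
    intro _
    rcases Nat.eq_zero_or_pos m with h | h
    · subst h; norm_num
    · have := ih h
      have h4 : 16 ^ (m + 1) = 16 * 16 ^ m := by ring
      nlinarith


/-- Case 2, local lemma application: with `s = 2k`, `t = (64k)^{2k}`, if no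
pair of clusters joined by an edge of `P_n^k` contains a blue `K_{s,s}`, then each such pair
carries at most a `4t^{-1/s}` fraction of blue pairs, and one can choose `y_i ∈ B(x_i)` with
all relevant pairs red (non-blue). -/
theorem stmt_14 {V : Type*} (blue : V → V → Prop) (hsymm : ∀ u v, blue u v → blue v u)
    (k n : ℕ) (hk : 1 ≤ k)
    (B : Fin n → Finset V)
    (hB : ∀ i, (B i).card = (64 * k) ^ (2 * k))
    (hnoKss : ∀ i j : Fin n, (i : ℕ) < (j : ℕ) → (j : ℕ) ≤ (i : ℕ) + k →
      ¬ ∃ (S T : Finset V), S ⊆ B i ∧ T ⊆ B j ∧ S.card = 2 * k ∧ T.card = 2 * k ∧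
        ∀ u ∈ S, ∀ v ∈ T, blue u v) :
    (∀ i j : Fin n, (i : ℕ) < (j : ℕ) → (j : ℕ) ≤ (i : ℕ) + k →
      ({p : V × V | p.1 ∈ B i ∧ p.2 ∈ B j ∧ blue p.1 p.2}.ncard : ℝ) /
          ((((64 * k) ^ (2 * k) : ℕ) : ℝ) ^ 2) ≤
        4 * (((64 * k) ^ (2 * k) : ℕ) : ℝ) ^ (-(1 : ℝ) / (2 * k))) ∧
    ∃ y : Fin n → V, (∀ i, y i ∈ B i) ∧
      ∀ i j : Fin n, (i : ℕ) < (j : ℕ) → (j : ℕ) ≤ (i : ℕ) + k →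
        ¬ blue (y i) (y j) := by
  classical
  obtain ⟨m, hm1, hm2⟩ : ∃ m, 2 * k - 1 = m ∧ 2 * k = m + 1 := ⟨2 * k - 1, rfl, by omega⟩
  obtain ⟨r, hr1, hr2⟩ : ∃ r, 4 * k - 1 = r ∧ 4 * k = r + 1 := ⟨4 * k - 1, rfl, by omega⟩
  set t := (64 * k) ^ (2 * k) with htdef
  set q := 4 * 8 ^ m * (8 * k) ^ m with hqdef
  set M := (2 * k - 1) * (16 * k) ^ (2 * k) with hMdef
  set E := 2 * (64 * k) ^ r with hEdef
  -- basic positivity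
  have hk0 : 0 < k := hk
  have ht0 : 0 < t := by rw [htdef]; positivity
  -- identity : 16 k q = t
  have h648 : ∀ j : ℕ, (64 * k) ^ j = 8 ^ j * (8 * k) ^ j := fun j => by
    rw [← mul_pow]; congr 1; ring
  have hq16 : 16 * k * q = t := by
    rw [htdef, hqdef, hm2, pow_succ, h648 m]
    ring
  -- s ≤ q
  have h8m : 1 ≤ 8 ^ m := Nat.one_le_pow _ _ (by omega)
  have h8km : 8 * k ≤ (8 * k) ^ m := Nat.le_self_pow (by omega) _
  have hqs : 2 * k ≤ q := by
    calc 2 * k ≤ 4 * 1 * (8 * k) := by omega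
      _ ≤ 4 * 8 ^ m * (8 * k) ^ m := by
          exact Nat.mul_le_mul (Nat.mul_le_mul_left 4 h8m) h8km
  -- t = 16^k * (16 k)^(2k)
  have ht2 : t = 16 ^ k * (16 * k) ^ (2 * k) := by
    rw [htdef, show (64 * k) = 4 * (16 * k) from by ring, mul_pow,
      show ((4 : ℕ)) ^ (2 * k) = 16 ^ k from by rw [pow_mul]; norm_num]
  -- key numeric: k*(2q) + k*M < t
  have hkM : k * (2 * q) + k * M < t := by
    have hpos : 0 < (16 * k) ^ (2 * k) := by positivity
    have haux := aux_16k k hk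
    have h1 : 8 * (k * M) < 7 * t := by
      rw [hMdef, ht2]
      calc 8 * (k * ((2 * k - 1) * (16 * k) ^ (2 * k)))
          = (8 * k * (2 * k - 1)) * (16 * k) ^ (2 * k) := by ring
        _ ≤ (16 * (k * k)) * (16 * k) ^ (2 * k) := by
            apply Nat.mul_le_mul_right
            calc 8 * k * (2 * k - 1) ≤ 8 * k * (2 * k) := Nat.mul_le_mul_left _ (by omega)
              _ = 16 * (k * k) := by ring
        _ < (7 * 16 ^ k) * (16 * k) ^ (2 * k) := by
            exact (Nat.mul_lt_mul_right hpos).mpr haux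
        _ = 7 * (16 ^ k * (16 * k) ^ (2 * k)) := by ring
    have h2 : 8 * (k * (2 * q)) = t := by rw [← hq16]; ring
    linarith
  -- hE1
  have hE1 : (2 * k - 1) * t ^ (2 * (2 * k) - 1) < E ^ (2 * k) := by
    have hround : 2 * (2 * k) - 1 = r := by omega
    rw [hround, hEdef, htdef, ← pow_mul, mul_pow 2 _ (2 * k), ← pow_mul,
      show r * (2 * k) = 2 * k * r from Nat.mul_comm _ _]
    refine (Nat.mul_lt_mul_right (by positivity)).mpr ?_
    calc 2 * k - 1 < 4 * k := by omega
      _ ≤ 4 ^ k := aux_4k k hk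
      _ = 2 ^ (2 * k) := by rw [pow_mul]; norm_num
  -- hE2
  have hE2 : t * (2 * k) ≤ E := by
    have hr3 : r = 2 * k + m := by omega
    rw [hEdef, hr3, pow_add, htdef]
    have hkm : k ≤ (64 * k) ^ m := by
      calc k ≤ 64 * k := by omega
        _ ≤ (64 * k) ^ m := Nat.le_self_pow (by omega) _
    calc (64 * k) ^ (2 * k) * (2 * k) = 2 * ((64 * k) ^ (2 * k) * k) := by ring
      _ ≤ 2 * ((64 * k) ^ (2 * k) * (64 * k) ^ m) := by
          exact Nat.mul_le_mul_left 2 (Nat.mul_le_mul_left _ hkm)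
  -- hE3
  have hE3 : 64 * k * (2 * E) = 4 * t ^ 2 := by
    rw [hEdef, htdef, ← pow_mul, show 2 * k * 2 = r + 1 from by omega, pow_succ]
    ring
  -- reformulated no-Kss
  have hno' : ∀ i j : Fin n, (i : ℕ) < (j : ℕ) → (j : ℕ) ≤ (i : ℕ) + k →
      ∀ S T : Finset V, S ⊆ B i → T ⊆ B j → S.card = 2 * k → T.card = 2 * k →
        ¬ ∀ u ∈ S, ∀ v ∈ T, blue u v := by
    intro i j hij hjk S T h1 h2 h3 h4 h5
    exact hnoKss i j hij hjk ⟨S, T, h1, h2, h3, h4, h5⟩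
  -- degree bound
  have degBound : ∀ i j : Fin n, (i : ℕ) < (j : ℕ) → (j : ℕ) ≤ (i : ℕ) + k →
      ((B i).filter (fun u => 2 * q ≤ ((B j).filter (fun v => blue u v)).card)).card ≤ M := by
    intro i j hij hjk
    have h := blue_deg_bound blue (2 * k) (2 * q) (by omega) (B i) (B j) (hno' i j hij hjk)
    rw [hB j] at h
    have hqle : q ≤ 2 * q + 1 - 2 * k := by omega
    have hq0 : 0 < q ^ (2 * k) := by
      have : 0 < q := by omega
      positivity
    apply Nat.le_of_mul_le_mul_right _ hq0
    calc ((B i).filter (fun u => 2 * q ≤ ((B j).filter (fun v => blue u v)).card)).card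
          * q ^ (2 * k)
        ≤ ((B i).filter (fun u => 2 * q ≤ ((B j).filter (fun v => blue u v)).card)).card
          * (2 * q + 1 - 2 * k) ^ (2 * k) := by
          exact Nat.mul_le_mul_left _ (Nat.pow_le_pow_left hqle _)
      _ ≤ (2 * k - 1) * t ^ (2 * k) := h
      _ = (2 * k - 1) * (16 * k * q) ^ (2 * k) := by rw [hq16]
      _ = M * q ^ (2 * k) := by rw [hMdef, mul_pow]; ring
  constructor
  · -- Part 1 : density bound
    intro i j hij hjk
    have he := blue_edge_bound blue (2 * k) t E (by omega) (B i) (B j) (hB i) (hB j)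
      (hno' i j hij hjk) hE1 hE2
    have hset : {p : V × V | p.1 ∈ B i ∧ p.2 ∈ B j ∧ blue p.1 p.2}
        = ↑(((B i) ×ˢ (B j)).filter (fun p => blue p.1 p.2)) := by
      ext ⟨u, v⟩
      simp only [Set.mem_setOf_eq, Finset.coe_filter, Finset.mem_product, Set.mem_setOf_eq]
      tauto
    rw [hset, Set.ncard_coe_finset]
    have hcard : (((B i) ×ˢ (B j)).filter (fun p => blue p.1 p.2)).card
        = ∑ u ∈ B i, ((B j).filter (fun v => blue u v)).card := by
      rw [Finset.card_filter, Finset.sum_product]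
      exact Finset.sum_congr rfl fun u _ => by rw [Finset.card_filter]
    rw [hcard]
    have hb0 : (0 : ℝ) < 64 * (k : ℝ) := by positivity
    have hbase : ((t : ℕ) : ℝ) = (64 * (k : ℝ)) ^ (2 * k : ℕ) := by
      rw [htdef]; push_cast; ring
    rw [hbase, ← Real.rpow_natCast (64 * (k : ℝ)) (2 * k), ← Real.rpow_mul hb0.le]
    have hexp : ((2 * k : ℕ) : ℝ) * (-(1 : ℝ) / (2 * (k : ℝ))) = -1 := by
      have : (k : ℝ) ≠ 0 := by positivity
      push_cast
      field_simp
    rw [hexp, Real.rpow_neg_one]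
    rw [Real.rpow_natCast]
    rw [div_le_iff₀ (by positivity : (0 : ℝ) < ((64 * (k:ℝ)) ^ (2 * k : ℕ)) ^ 2)]
    have hnat : (∑ u ∈ B i, ((B j).filter (fun v => blue u v)).card) * (64 * k)
        ≤ 4 * t ^ 2 := by
      calc (∑ u ∈ B i, ((B j).filter (fun v => blue u v)).card) * (64 * k)
          ≤ (2 * E) * (64 * k) := Nat.mul_le_mul_right _ he
        _ = 4 * t ^ 2 := by rw [← hE3]; ring
    have heq : (4 : ℝ) * (64 * (k:ℝ))⁻¹ * ((64 * (k:ℝ)) ^ (2 * k : ℕ)) ^ 2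
        = 4 * ((64 * (k:ℝ)) ^ (2 * k : ℕ)) ^ 2 / (64 * (k:ℝ)) := by
      field_simp
    rw [heq, le_div_iff₀ hb0]
    calc ((∑ u ∈ B i, ((B j).filter (fun v => blue u v)).card : ℕ) : ℝ) * (64 * (k:ℝ))
        = (((∑ u ∈ B i, ((B j).filter (fun v => blue u v)).card) * (64 * k) : ℕ) : ℝ) := by
          push_cast; ring
      _ ≤ ((4 * t ^ 2 : ℕ) : ℝ) := by exact_mod_cast hnat
      _ = 4 * ((64 * (k:ℝ)) ^ (2 * k : ℕ)) ^ 2 := by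
          rw [htdef]; push_cast; ring
  · -- Part 2 : greedy choice
    have hBne : ∀ i : Fin n, (B i).Nonempty := by
      intro i
      rw [← Finset.card_pos, hB i]
      exact ht0
    have main : ∀ m0 : ℕ, m0 ≤ n → ∃ y : Fin n → V,
        ∀ i : Fin n, (i : ℕ) < m0 →
          y i ∈ B i ∧
          (∀ j : Fin n, (i : ℕ) < (j : ℕ) → (j : ℕ) ≤ (i : ℕ) + k →
            ((B j).filter (fun v => blue (y i) v)).card < 2 * q) ∧
          (∀ i' : Fin n, (i' : ℕ) < (i : ℕ) → (i : ℕ) ≤ (i' : ℕ) + k →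
            ¬ blue (y i') (y i)) := by
      intro m0
      induction m0 with
      | zero =>
        intro _
        exact ⟨fun i => (hBne i).choose, fun i hi => absurd hi (by omega)⟩
      | succ m1 ih =>
        intro hm1n
        obtain ⟨y, hy⟩ := ih (by omega)
        have hmn : m1 < n := hm1n
        set mF : Fin n := ⟨m1, hmn⟩ with hmFdef
        have hmFval : (mF : ℕ) = m1 := rfl
        set F : Finset V := (B mF).filter (fun v =>
          (∃ i' : Fin n, (i' : ℕ) < m1 ∧ m1 ≤ (i' : ℕ) + k ∧ blue (y i') v) ∨
          (∃ j : Fin n, m1 < (j : ℕ) ∧ (j : ℕ) ≤ m1 + k ∧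
            2 * q ≤ ((B j).filter (fun w => blue v w)).card)) with hFdef
        set I1 : Finset (Fin n) :=
          Finset.univ.filter (fun i' : Fin n => (i' : ℕ) < m1 ∧ m1 ≤ (i' : ℕ) + k) with hI1def
        set I2 : Finset (Fin n) :=
          Finset.univ.filter (fun j : Fin n => m1 < (j : ℕ) ∧ (j : ℕ) ≤ m1 + k) with hI2def
        have hFsub : F ⊆ (I1.biUnion (fun i' => (B mF).filter (fun v => blue (y i') v)))
            ∪ (I2.biUnion (fun j => (B mF).filter
                (fun v => 2 * q ≤ ((B j).filter (fun w => blue v w)).card))) := by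
          intro v hv
          rw [hFdef, Finset.mem_filter] at hv
          obtain ⟨hvB, hd⟩ := hv
          rcases hd with ⟨i', h1, h2, h3⟩ | ⟨j, h1, h2, h3⟩
          · refine Finset.mem_union_left _ (Finset.mem_biUnion.2 ⟨i', ?_, ?_⟩)
            · rw [hI1def]; simp only [Finset.mem_filter, Finset.mem_univ, true_and]
              exact ⟨h1, h2⟩
            · exact Finset.mem_filter.2 ⟨hvB, h3⟩
          · refine Finset.mem_union_right _ (Finset.mem_biUnion.2 ⟨j, ?_, ?_⟩)
            · rw [hI2def]; simp only [Finset.mem_filter, Finset.mem_univ, true_and]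
              exact ⟨h1, h2⟩
            · exact Finset.mem_filter.2 ⟨hvB, h3⟩
        have hI1card : I1.card ≤ k := by
          calc I1.card ≤ (Finset.Ico (m1 - k) m1).card := by
                apply Finset.card_le_card_of_injOn Fin.val
                · intro i' hi'
                  rw [hI1def, Finset.mem_coe, Finset.mem_filter] at hi'
                  rw [Finset.mem_coe, Finset.mem_Ico]
                  omega
                · exact fun a _ b _ h => Fin.ext h
            _ ≤ k := by rw [Nat.card_Ico]; omega
        have hI2card : I2.card ≤ k := by
          calc I2.card ≤ (Finset.Ico (m1 + 1) (m1 + k + 1)).card := by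
                apply Finset.card_le_card_of_injOn Fin.val
                · intro j hj
                  rw [hI2def, Finset.mem_coe, Finset.mem_filter] at hj
                  rw [Finset.mem_coe, Finset.mem_Ico]
                  omega
                · exact fun a _ b _ h => Fin.ext h
            _ ≤ k := by rw [Nat.card_Ico]; omega
        have hF1card : (I1.biUnion (fun i' => (B mF).filter (fun v => blue (y i') v))).card
            ≤ k * (2 * q) := by
          calc (I1.biUnion (fun i' => (B mF).filter (fun v => blue (y i') v))).card
              ≤ ∑ i' ∈ I1, ((B mF).filter (fun v => blue (y i') v)).card :=
                Finset.card_biUnion_le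
            _ ≤ ∑ _i' ∈ I1, (2 * q) := by
                apply Finset.sum_le_sum
                intro i' hi'
                rw [hI1def, Finset.mem_filter] at hi'
                obtain ⟨-, h1, h2⟩ := hi'
                have := (hy i' (by omega)).2.1 mF (by omega) (by omega)
                omega
            _ = I1.card * (2 * q) := by rw [Finset.sum_const, smul_eq_mul]
            _ ≤ k * (2 * q) := Nat.mul_le_mul_right _ hI1card
        have hF2card : (I2.biUnion (fun j => (B mF).filter
            (fun v => 2 * q ≤ ((B j).filter (fun w => blue v w)).card))).card ≤ k * M := by
          calc (I2.biUnion (fun j => (B mF).filter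
              (fun v => 2 * q ≤ ((B j).filter (fun w => blue v w)).card))).card
              ≤ ∑ j ∈ I2, ((B mF).filter
                  (fun v => 2 * q ≤ ((B j).filter (fun w => blue v w)).card)).card :=
                Finset.card_biUnion_le
            _ ≤ ∑ _j ∈ I2, M := by
                apply Finset.sum_le_sum
                intro j hj
                rw [hI2def, Finset.mem_filter] at hj
                obtain ⟨-, h1, h2⟩ := hj
                exact degBound mF j (by omega) (by omega)
            _ = I2.card * M := by rw [Finset.sum_const, smul_eq_mul]
            _ ≤ k * M := Nat.mul_le_mul_right _ hI2card
        have hFcard : F.card < t := by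
          have := Finset.card_le_card hFsub
          have hu := Finset.card_union_le
            (I1.biUnion (fun i' => (B mF).filter (fun v => blue (y i') v)))
            (I2.biUnion (fun j => (B mF).filter
              (fun v => 2 * q ≤ ((B j).filter (fun w => blue v w)).card)))
          omega
        have hvex : ∃ v ∈ B mF, v ∉ F := by
          by_contra hcon
          push_neg at hcon
          have hsub : B mF ⊆ F := fun v hv => hcon v hv
          have := Finset.card_le_card hsub
          rw [hB mF] at this
          omega
        obtain ⟨v, hvB, hvF⟩ := hvex
        have hnd : ¬ ((∃ i' : Fin n, (i' : ℕ) < m1 ∧ m1 ≤ (i' : ℕ) + k ∧ blue (y i') v) ∨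
            (∃ j : Fin n, m1 < (j : ℕ) ∧ (j : ℕ) ≤ m1 + k ∧
              2 * q ≤ ((B j).filter (fun w => blue v w)).card)) := by
          intro hd
          exact hvF (by rw [hFdef]; exact Finset.mem_filter.2 ⟨hvB, hd⟩)
        push_neg at hnd
        obtain ⟨hnd1, hnd2⟩ := hnd
        refine ⟨Function.update y mF v, ?_⟩
        intro i hi
        rcases Nat.lt_or_ge (i : ℕ) m1 with him | him
        · have hine : i ≠ mF := by
            intro h
            rw [h] at him
            simp only [hmFdef] at him
            omega
          have hupd : Function.update y mF v i = y i := Function.update_of_ne hine _ _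
          obtain ⟨p1, p2, p3⟩ := hy i him
          refine ⟨by rwa [hupd], by rw [hupd]; exact p2, ?_⟩
          intro i' hi' hik
          have hine' : i' ≠ mF := by
            intro h
            rw [h] at hi'
            simp only [hmFdef] at hi'
            omega
          rw [hupd, Function.update_of_ne hine' _ _]
          exact p3 i' hi' hik
        · have hieq : i = mF := by
            apply Fin.ext
            simp only [hmFdef]
            omega
          have hupd : Function.update y mF v i = v := by
            rw [hieq, Function.update_self]
          have hival : (i : ℕ) = m1 := by rw [hieq]
          refine ⟨?_, ?_, ?_⟩
          · rw [hupd, hieq]; exact hvB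
          · intro j hj hjk
            rw [hupd]
            have := hnd2 j (by omega) (by omega)
            omega
          · intro i' hi' hik
            have hine' : i' ≠ mF := by
              intro h
              rw [h] at hi'
              simp only [hmFdef] at hi'
              omega
            rw [hupd, Function.update_of_ne hine' _ _]
            exact hnd1 i' (by omega) (by omega)
    obtain ⟨y, hy⟩ := main n le_rfl
    exact ⟨y, fun i => (hy i i.isLt).1, fun i j hij hjk => (hy j j.isLt).2.2 i hij hjk⟩
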